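/- Let ξ be in the dual group of the sandpile group of a finite graph G with sink s, with distinguished prevector ν (the reduced Laplacian applied to the representative ξ' of ξ whose values lie in (C(ξ)−1/2, C(ξ)+1/2] where C(ξ) = (1/2π)arg μ̂(ξ)). Then 1 − |μ̂(ξ)| ≫ ‖ν‖₂²/|V| ≥ ‖ν‖₁/|V|, where the implied constant depends only on the maximal degree of G. -/

import Mathlib

open Finset

private lemma cos_bd' {y : ℝ} (hy : |y| ≤ 1/2) : 8 * y^2 ≤ 1 - Real.cos (2*Real.pi*y) := by
  have hpi := Real.pi_pos
  have h : |2*Real.pi*y| ≤ Real.pi := by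
    rw [abs_mul, abs_of_pos (by positivity : (0:ℝ) < 2*Real.pi)]
    nlinarith [abs_nonneg y]
  have h2 := Real.cos_le_one_sub_mul_cos_sq h
  have h3 : 2 / Real.pi ^ 2 * (2*Real.pi*y)^2 = 8 * y^2 := by
    field_simp; ring
  nlinarith

private lemma int_abs_le_sq' (m : ℤ) : |(m:ℝ)| ≤ (m:ℝ)^2 := by
  rcases eq_or_ne m 0 with rfl | h
  · simp
  · have h1 : (1:ℤ) ≤ |m| := Int.one_le_abs (by simpa using h)
    have h2 : |m| ≤ m^2 := by nlinarith [sq_abs m]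
    calc |(m:ℝ)| = ((|m| : ℤ) : ℝ) := by push_cast; ring
    _ ≤ ((m^2 : ℤ) : ℝ) := by exact_mod_cast h2
    _ = (m:ℝ)^2 := by push_cast; ring

private lemma abs_eq_mean_cos' {V : Type} [Fintype V] (ξ : V → ℝ) (F : ℂ)
    (hF : F = (1 / Fintype.card V : ℂ) * ∑ v, Complex.exp (2 * Real.pi * Complex.I * (ξ v : ℝ))) :
    (Fintype.card V : ℝ) * ‖F‖
      = ∑ v, Real.cos (2*Real.pi*ξ v - Complex.arg F) := by
  set A := Complex.arg F with hA
  have h0 : (‖F‖ : ℂ) = F * Complex.exp (-(↑A * Complex.I)) := by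
    conv_rhs => rw [← Complex.norm_mul_exp_arg_mul_I F]
    rw [mul_assoc, ← Complex.exp_add, ← hA]
    simp
  have h1 : F * Complex.exp (-(↑A * Complex.I))
      = (1 / Fintype.card V : ℂ) * ∑ v, Complex.exp (((2*Real.pi*ξ v - A : ℝ) : ℂ) * Complex.I) := by
    rw [hF, mul_assoc, Finset.sum_mul]
    congr 1
    refine Finset.sum_congr rfl fun v _ => ?_
    rw [← Complex.exp_add]
    congr 1
    push_cast
    ring
  have h2 := congrArg Complex.re (h0.trans h1)
  simp only [Complex.ofReal_re] at h2
  rw [h2]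
  have hcard : ((1 : ℂ) / Fintype.card V) = (((1:ℝ)/Fintype.card V : ℝ) : ℂ) := by push_cast; ring
  rw [hcard, Complex.re_ofReal_mul, Complex.re_sum]
  simp only [Complex.exp_ofReal_mul_I_re]
  rcases Nat.eq_zero_or_pos (Fintype.card V) with h | h
  · have : IsEmpty V := Fintype.card_eq_zero_iff.mp h
    simp [h]
  · field_simp

private lemma lap_bound' {V : Type} [Fintype V] (d : V → V → ℕ) (D : ℕ)
    (hsym : ∀ v w, d v w = d w v) (hdeg : ∀ v, ∑ w, d v w ≤ D) (ψ : V → ℝ) :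
    ∑ v, (∑ w, (d v w : ℝ) * (ψ v - ψ w))^2 ≤ 4 * (D:ℝ)^2 * ∑ v, ψ v ^ 2 := by
  have hrow : ∀ v, (∑ w, (d v w : ℝ)) ≤ D := by
    intro v
    calc (∑ w, (d v w : ℝ)) = ((∑ w, d v w : ℕ) : ℝ) := by push_cast; ring
    _ ≤ D := by exact_mod_cast hdeg v
  have hcol : ∀ w, (∑ v, (d v w : ℝ)) ≤ D := by
    intro w
    calc (∑ v, (d v w : ℝ)) = ∑ v, (d w v : ℝ) :=
          Finset.sum_congr rfl fun v _ => by rw [hsym]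
    _ ≤ D := hrow w
  have step1 : ∀ v, (∑ w, (d v w : ℝ) * (ψ v - ψ w))^2
      ≤ (D:ℝ) * ∑ w, (d v w : ℝ) * (ψ v - ψ w)^2 := by
    intro v
    have cs := Finset.sum_sq_le_sum_mul_sum_of_sq_eq_mul Finset.univ
      (r := fun w => (d v w : ℝ) * (ψ v - ψ w))
      (f := fun w => (d v w : ℝ))
      (g := fun w => (d v w : ℝ) * (ψ v - ψ w)^2)
      (fun w _ => by positivity)
      (fun w _ => by positivity)
      (fun w _ => by ring)
    refine cs.trans ?_
    have hg : (0:ℝ) ≤ ∑ w, (d v w : ℝ) * (ψ v - ψ w)^2 :=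
      Finset.sum_nonneg fun w _ => by positivity
    exact mul_le_mul_of_nonneg_right (hrow v) hg
  calc ∑ v, (∑ w, (d v w : ℝ) * (ψ v - ψ w))^2
      ≤ ∑ v, (D:ℝ) * ∑ w, (d v w : ℝ) * (ψ v - ψ w)^2 :=
        Finset.sum_le_sum fun v _ => step1 v
    _ = (D:ℝ) * ∑ v, ∑ w, (d v w : ℝ) * (ψ v - ψ w)^2 := by rw [← Finset.mul_sum]
    _ ≤ (D:ℝ) * ∑ v, ∑ w, (d v w : ℝ) * (2 * ψ v ^2 + 2 * ψ w ^2) := by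
        refine mul_le_mul_of_nonneg_left ?_ (by positivity)
        refine Finset.sum_le_sum fun v _ => Finset.sum_le_sum fun w _ => ?_
        have : (ψ v - ψ w)^2 ≤ 2 * ψ v ^2 + 2 * ψ w ^2 := by nlinarith [sq_nonneg (ψ v + ψ w)]
        exact mul_le_mul_of_nonneg_left this (by positivity)
    _ = (D:ℝ) * (2 * ∑ v, (∑ w, (d v w : ℝ)) * ψ v ^2
          + 2 * ∑ w, (∑ v, (d v w : ℝ)) * ψ w ^2) := by
        congr 1
        simp_rw [mul_add, Finset.sum_add_distrib]
        rw [Finset.sum_comm (f := fun v w => (d v w:ℝ) * (2*ψ w^2)),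
          Finset.mul_sum, Finset.mul_sum]
        congr 1
        · exact Finset.sum_congr rfl fun v _ => by rw [← Finset.sum_mul]; ring
        · exact Finset.sum_congr rfl fun w _ => by rw [← Finset.sum_mul]; ring
    _ ≤ (D:ℝ) * (2 * ∑ v, (D:ℝ) * ψ v ^2 + 2 * ∑ w, (D:ℝ) * ψ w ^2) := by
        refine mul_le_mul_of_nonneg_left (add_le_add ?_ ?_) (by positivity) <;>
        · refine mul_le_mul_of_nonneg_left
            (Finset.sum_le_sum fun v _ => mul_le_mul_of_nonneg_right ?_ (sq_nonneg _))
            (by norm_num)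
          first | exact hrow v | exact hcol v
    _ = 4 * (D:ℝ)^2 * ∑ v, ψ v ^ 2 := by rw [← Finset.mul_sum]; ring

/-- Let `ξ` be (a real representative of) an element of the dual of the sandpile group of a
finite multigraph with sink `s` (so `ξ(s) = 0` and the reduced Laplacian of `ξ` is integer
valued), and let `ξ'` be the distinguished representative, with values in
`(C(ξ) − 1/2, C(ξ) + 1/2]` where `C(ξ) = (1/2π) arg μ̂(ξ)`, and `ν = Δ'ξ'` the distinguished
prevector.  Then `1 − |μ̂(ξ)| ≫ ‖ν‖₂²/|V| ≥ ‖ν‖₁/|V|`, the implied constant depending only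
on the maximal degree. -/
theorem stmt_13 :
    ∀ Dmax : ℕ, ∃ κ : ℝ, 0 < κ ∧
      ∀ (V : Type) [Fintype V] [DecidableEq V] (deg : V → V → ℕ) (s : V),
        (∀ v w, deg v w = deg w v) → (∀ v, deg v v = 0) →
        (∀ v, ∑ w, deg v w ≤ Dmax) →
        ∀ ξ ξ' : V → ℝ, ξ s = 0 →
        (∀ v, v ≠ s → ∃ k : ℤ,
          (∑ w, (deg v w : ℝ)) * ξ v - ∑ w, (deg v w : ℝ) * ξ w = k) →
        ∀ (F : ℂ), F = (1 / Fintype.card V : ℂ) *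
            ∑ v, Complex.exp (2 * Real.pi * Complex.I * (ξ v : ℝ)) →
        ∀ (C : ℝ), C = Complex.arg F / (2 * Real.pi) →
        ξ' s = 0 →
        (∀ v, v ≠ s → (∃ k : ℤ, ξ' v = ξ v + k) ∧
          ξ' v ∈ Set.Ioc (C - 1 / 2) (C + 1 / 2)) →
        ∀ (ν : V → ℝ), (ν = fun v => if v = s then 0 else
            (∑ w, (deg v w : ℝ)) * ξ' v -
              ∑ w, (if w = s then (0 : ℝ) else (deg v w : ℝ) * ξ' w)) →
        κ * ((∑ v, ν v ^ 2) / Fintype.card V) ≤ 1 - ‖F‖ ∧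
          (∑ v, |ν v|) / Fintype.card V ≤ (∑ v, ν v ^ 2) / Fintype.card V := by
  intro Dmax
  refine ⟨2/((Dmax:ℝ)+1)^2, by positivity, ?_⟩
  intro V _ _ deg s hsym hdiag hdeg ξ ξ' hξs hint F hF C hC hξ's hrep ν hν
  have hpi := Real.pi_pos
  have hn : 0 < Fintype.card V := Fintype.card_pos_iff.mpr ⟨s⟩
  have hnR : (0:ℝ) < (Fintype.card V : ℝ) := by exact_mod_cast hn
  -- integer shift function
  have hKf : ∃ K : V → ℤ, ∀ v, ξ' v = ξ v + K v := by
    choose K hK using fun v => (em (v = s)).elim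
      (fun h => (⟨0, by rw [h, hξ's, hξs]; simp⟩ : ∃ k : ℤ, ξ' v = ξ v + k))
      (fun h => (hrep v h).1)
    exact ⟨K, hK⟩
  obtain ⟨K, hK⟩ := hKf
  -- remove the `if` in the ν formula
  have hν' : ∀ v, v ≠ s → ν v = (∑ w, (deg v w:ℝ)) * ξ' v - ∑ w, (deg v w:ℝ) * ξ' w := by
    intro v h
    rw [hν]
    simp only [if_neg h]
    congr 1
    refine Finset.sum_congr rfl fun w _ => ?_
    by_cases hw : w = s
    · subst hw; simp [hξ's]
    · simp [hw]
  -- ν is integer valued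
  have hintν : ∀ v, ∃ m : ℤ, ν v = m := by
    intro v
    by_cases h : v = s
    · exact ⟨0, by rw [hν]; simp [h]⟩
    · obtain ⟨k, hk⟩ := hint v h
      refine ⟨k + (∑ w, (deg v w : ℤ)) * K v - ∑ w, (deg v w:ℤ) * K w, ?_⟩
      rw [hν' v h]
      simp only [hK, mul_add, Finset.sum_add_distrib]
      push_cast
      linear_combination hk
  -- second inequality
  have hl1 : ∑ v, |ν v| ≤ ∑ v, ν v ^ 2 := by
    refine Finset.sum_le_sum fun v _ => ?_
    obtain ⟨m, hm⟩ := hintν v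
    rw [hm]
    exact int_abs_le_sq' m
  refine ⟨?_, by gcongr⟩
  -- the ψ function bounds
  have hψ : ∀ v, |ξ' v - C| ≤ 1/2 := by
    intro v
    by_cases h : v = s
    · subst h
      rw [hξ's, hC, zero_sub, abs_neg, abs_div,
        abs_of_pos (by positivity : (0:ℝ) < 2*Real.pi), div_le_iff₀ (by positivity)]
      have h1 := Complex.neg_pi_lt_arg F
      have h2 := Complex.arg_le_pi F
      rw [abs_le]
      constructor <;> nlinarith
    · have h2 := (hrep v h).2
      rw [abs_le]
      exact ⟨by linarith [h2.1], by linarith [h2.2]⟩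
  have hcos : ∀ v, Real.cos (2*Real.pi*ξ v - Complex.arg F)
      = Real.cos (2*Real.pi*(ξ' v - C)) := by
    intro v
    have hA : Complex.arg F = 2*Real.pi*C := by rw [hC]; field_simp
    have he : 2*Real.pi*(ξ' v - C) = (2*Real.pi*ξ v - Complex.arg F) + (K v) * (2*Real.pi) := by
      rw [hK v, hA]; push_cast; ring
    rw [he, Real.cos_add_int_mul_two_pi]
  have hkey := abs_eq_mean_cos' ξ F hF
  have hsum : (Fintype.card V : ℝ) * ‖F‖
      ≤ (Fintype.card V : ℝ) - 8 * ∑ v, (ξ' v - C)^2 := by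
    rw [hkey]
    calc ∑ v, Real.cos (2*Real.pi*ξ v - Complex.arg F)
        = ∑ v, Real.cos (2*Real.pi*(ξ' v - C)) := Finset.sum_congr rfl fun v _ => hcos v
      _ ≤ ∑ v, (1 - 8 * (ξ' v - C)^2) :=
          Finset.sum_le_sum fun v _ => by have := cos_bd' (hψ v); linarith
      _ = (Fintype.card V : ℝ) - 8 * ∑ v, (ξ' v - C)^2 := by
          rw [Finset.sum_sub_distrib, Finset.sum_const, Finset.card_univ, ← Finset.mul_sum]
          simp
  have hlap : ∑ v, ν v ^ 2 ≤ 4 * (Dmax:ℝ)^2 * ∑ v, (ξ' v - C)^2 := by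
    have h1 : ∑ v, ν v ^ 2
        ≤ ∑ v, (∑ w, (deg v w:ℝ) * ((ξ' v - C) - (ξ' w - C)))^2 := by
      refine Finset.sum_le_sum fun v _ => ?_
      by_cases h : v = s
      · have hz : ν v = 0 := by rw [hν]; simp [h]
        rw [hz]
        simpa using sq_nonneg _
      · rw [hν' v h]
        apply le_of_eq
        have he : ∀ w, (deg v w:ℝ) * ((ξ' v - C) - (ξ' w - C))
            = (deg v w:ℝ) * ξ' v - (deg v w:ℝ) * ξ' w := fun w => by ring
        simp_rw [he, Finset.sum_sub_distrib, ← Finset.sum_mul]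
    exact h1.trans (lap_bound' deg Dmax hsym hdeg _)
  have hP0 : (0:ℝ) ≤ ∑ v, (ξ' v - C)^2 := Finset.sum_nonneg fun v _ => sq_nonneg _
  have hq : 2/((Dmax:ℝ)+1)^2 * (4*(Dmax:ℝ)^2) ≤ 8 := by
    rw [div_mul_eq_mul_div, div_le_iff₀ (by positivity)]
    nlinarith [Nat.cast_nonneg (α := ℝ) Dmax]
  rw [← mul_div_assoc, div_le_iff₀ hnR]
  have c1 : 2/((Dmax:ℝ)+1)^2 * (∑ v, ν v ^2)
      ≤ 2/((Dmax:ℝ)+1)^2 * (4*(Dmax:ℝ)^2 * ∑ v, (ξ' v - C)^2) :=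
    mul_le_mul_of_nonneg_left hlap (by positivity)
  have c3 : 2/((Dmax:ℝ)+1)^2 * (4*(Dmax:ℝ)^2 * ∑ v, (ξ' v - C)^2)
      ≤ 8 * ∑ v, (ξ' v - C)^2 := by
    calc 2/((Dmax:ℝ)+1)^2 * (4*(Dmax:ℝ)^2 * ∑ v, (ξ' v - C)^2)
        = (2/((Dmax:ℝ)+1)^2 * (4*(Dmax:ℝ)^2)) * ∑ v, (ξ' v - C)^2 := by ring
      _ ≤ 8 * ∑ v, (ξ' v - C)^2 := mul_le_mul_of_nonneg_right hq hP0
  have hr : (1 - ‖F‖) * (Fintype.card V : ℝ)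
      = (Fintype.card V : ℝ) - (Fintype.card V : ℝ) * ‖F‖ := by ring
  linarith
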